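/- Let T be the unit regular tetrahedron in ℝ³. For every α with 0 ≤ α ≤ 1, setting β = (1−α)/2, the volume of the Minkowski sum α•T + β•(−T) equals [α³ + (9/2)α²(1−α) + (9/4)α(1−α)² + (1/8)(1−α)³] · vol(T), where vol(T) = √2/12. -/

import Mathlib

open scoped Pointwise
open MeasureTheory

def Δpi : Set (Fin 3 → ℝ) := convexHull ℝ {![0,0,0], ![1,0,0], ![0,1,0], ![0,0,1]}

lemma simplex_char : Δpi = {x | 0 ≤ x 0 ∧ 0 ≤ x 1 ∧ 0 ≤ x 2 ∧ x 0 + x 1 + x 2 ≤ 1} := by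
  apply Set.Subset.antisymm
  · apply convexHull_min
    · intro x hx
      simp only [Set.mem_insert_iff, Set.mem_singleton_iff] at hx
      rcases hx with h|h|h|h <;> subst h <;> norm_num [Matrix.cons_val_two, Matrix.vecHead, Matrix.vecTail]
    · intro x hx y hy a b ha hb hab
      simp only [Set.mem_setOf_eq] at *
      have e0 : ∀ i, (a • x + b • y) i = a * x i + b * y i := by
        intro i; simp [Pi.add_apply, Pi.smul_apply, smul_eq_mul]
      rw [e0 0, e0 1, e0 2]
      refine ⟨by nlinarith [hx.1, hy.1], by nlinarith [hx.2.1, hy.2.1],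
        by nlinarith [hx.2.2.1, hy.2.2.1], by nlinarith [hx.2.2.2, hy.2.2.2]⟩
  · intro x hx
    obtain ⟨h0, h1, h2, hs⟩ := hx
    have hmem : ∀ i : Fin 4, (![![0,0,0], ![1,0,0], ![0,1,0], ![0,0,1]] i : Fin 3 → ℝ) ∈ Δpi := by
      intro i
      apply subset_convexHull
      fin_cases i <;> simp
    have := (convex_convexHull ℝ _).sum_mem (t := (Finset.univ : Finset (Fin 4)))
      (w := ![1 - (x 0 + x 1 + x 2), x 0, x 1, x 2])
      (z := ![![0,0,0], ![1,0,0], ![0,1,0], ![0,0,1]])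
      (by intro i _; fin_cases i <;> simp <;> linarith)
      (by simp [Fin.sum_univ_four]; ring)
      (fun i _ => hmem i)
    rw [Δpi]
    convert this using 1
    funext j
    fin_cases j <;>
      simp [Fin.sum_univ_four, Pi.add_apply, Pi.smul_apply, smul_eq_mul,
        Matrix.vecHead, Matrix.vecTail]

/-- The unit regular tetrahedron in `ℝ³`. -/
noncomputable def T : Set (EuclideanSpace ℝ (Fin 3)) :=
  convexHull ℝ {!₂[0, 0, 0], !₂[1, 0, 0], !₂[1/2, Real.sqrt 3 / 2, 0],
    !₂[1/2, Real.sqrt 3 / 6, Real.sqrt (2/3)]}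

noncomputable def Emap : (Fin 3 → ℝ) →ₗ[ℝ] EuclideanSpace ℝ (Fin 3) :=
  ((WithLp.linearEquiv 2 ℝ (Fin 3 → ℝ)).symm : (Fin 3 → ℝ) →ₗ[ℝ] EuclideanSpace ℝ (Fin 3))

noncomputable def Mmat : Matrix (Fin 3) (Fin 3) ℝ :=
  !![1, 1/2, 1/2; 0, Real.sqrt 3/2, Real.sqrt 3/6; 0, 0, Real.sqrt (2/3)]

noncomputable def Lmap : (Fin 3 → ℝ) →ₗ[ℝ] (Fin 3 → ℝ) := Matrix.toLin' Mmat


lemma Lmap_apply_vert :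
    Lmap ![0,0,0] = ![0,0,0] ∧ Lmap ![1,0,0] = ![1,0,0] ∧
    Lmap ![0,1,0] = ![1/2, Real.sqrt 3/2, 0] ∧
    Lmap ![0,0,1] = ![1/2, Real.sqrt 3/6, Real.sqrt (2/3)] := by
  refine ⟨?_, ?_, ?_, ?_⟩ <;> funext i <;> fin_cases i <;>
    simp [Lmap, Mmat, Matrix.toLin'_apply, Matrix.mulVec, dotProduct, Fin.sum_univ_three]

lemma T_eq : T = Emap '' (Lmap '' Δpi) := by
  rw [T, Δpi, LinearMap.image_convexHull, LinearMap.image_convexHull]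
  congr 1
  simp only [Set.image_insert_eq, Set.image_singleton,
    Lmap_apply_vert.1, Lmap_apply_vert.2.1, Lmap_apply_vert.2.2.1, Lmap_apply_vert.2.2.2]
  rfl


lemma mem_smul_simplex {a : ℝ} (ha : 0 ≤ a) {x : Fin 3 → ℝ} :
    x ∈ a • Δpi ↔ 0 ≤ x 0 ∧ 0 ≤ x 1 ∧ 0 ≤ x 2 ∧ x 0 + x 1 + x 2 ≤ a := by
  rcases eq_or_lt_of_le ha with h | h
  · subst h
    rw [Set.zero_smul_set ⟨![1,0,0], by apply subset_convexHull; simp⟩]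
    simp only [Set.mem_zero]  -- x ∈ 0 ↔ x = 0?
    constructor
    · rintro rfl; norm_num
    · rintro ⟨h0, h1, h2, hs⟩
      funext i; fin_cases i <;> [skip; skip; skip] <;> simp <;> linarith
  · rw [Set.mem_smul_set_iff_inv_smul_mem₀ (ne_of_gt h), simplex_char]
    have hinv : 0 < a⁻¹ := by positivity
    simp only [Set.mem_setOf_eq, Pi.smul_apply, smul_eq_mul]
    constructor
    · rintro ⟨h0, h1, h2, hs⟩
      refine ⟨by nlinarith, by nlinarith, by nlinarith, by nlinarith [mul_inv_cancel₀ (ne_of_gt h)]⟩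
    · rintro ⟨h0, h1, h2, hs⟩
      refine ⟨by positivity, by positivity, by positivity, ?_⟩
      have := mul_inv_cancel₀ (ne_of_gt h)
      nlinarith

lemma mem_smul_neg_simplex {b : ℝ} (hb : 0 ≤ b) {x : Fin 3 → ℝ} :
    x ∈ b • (-Δpi) ↔ x 0 ≤ 0 ∧ x 1 ≤ 0 ∧ x 2 ≤ 0 ∧ -b ≤ x 0 + x 1 + x 2 := by
  rw [Set.smul_set_neg, Set.mem_neg, mem_smul_simplex hb]
  simp only [Pi.neg_apply]
  constructor
  · rintro ⟨h0, h1, h2, hs⟩; refine ⟨by linarith, by linarith, by linarith, by linarith⟩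
  · rintro ⟨h0, h1, h2, hs⟩; refine ⟨by linarith, by linarith, by linarith, by linarith⟩

def Qcond (a b x y z : ℝ) : Prop :=
  -b ≤ x ∧ x ≤ a ∧ -b ≤ y ∧ y ≤ a ∧ -b ≤ z ∧ z ≤ a ∧
  -b ≤ x + y ∧ x + y ≤ a ∧ -b ≤ x + z ∧ x + z ≤ a ∧ -b ≤ y + z ∧ y + z ≤ a ∧
  -b ≤ x + y + z ∧ x + y + z ≤ a

def Qpi (a b : ℝ) : Set (Fin 3 → ℝ) := {t | Qcond a b (t 0) (t 1) (t 2)}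

lemma mink {a b : ℝ} (ha : 0 ≤ a) (hb : 0 ≤ b) : a • Δpi + b • (-Δpi) = Qpi a b := by
  ext t
  constructor
  · rintro ⟨u, hu, v, hv, rfl⟩
    rw [mem_smul_simplex ha] at hu
    rw [mem_smul_neg_simplex hb] at hv
    obtain ⟨u0, u1, u2, us⟩ := hu
    obtain ⟨v0, v1, v2, vs⟩ := hv
    simp only [Qpi, Qcond, Set.mem_setOf_eq, Pi.add_apply]
    refine ⟨by linarith, by linarith, by linarith, by linarith, by linarith, by linarith,
      by linarith, by linarith, by linarith, by linarith, by linarith, by linarith,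
      by linarith, by linarith⟩
  · rintro ⟨c1, c2, c3, c4, c5, c6, c7, c8, c9, c10, c11, c12, c13, c14⟩
    refine ⟨fun i => max (t i) 0, ?_, fun i => min (t i) 0, ?_, ?_⟩
    · rw [mem_smul_simplex ha]
      refine ⟨le_max_right _ _, le_max_right _ _, le_max_right _ _, ?_⟩
      simp only [max_def]
      split_ifs <;> linarith
    · rw [mem_smul_neg_simplex hb]
      refine ⟨min_le_right _ _, min_le_right _ _, min_le_right _ _, ?_⟩
      simp only [min_def]
      split_ifs <;> linarith
    · funext i
      simp only [Pi.add_apply]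
      rw [max_add_min]
      ring

lemma lint_linear {c : ℝ} (hc : 0 ≤ c) :
    ∫⁻ x in Set.Icc 0 c, ENNReal.ofReal (c - x) = ENNReal.ofReal (c^2/2) := by
  rw [← MeasureTheory.ofReal_integral_eq_lintegral_ofReal]
  · congr 1
    rw [MeasureTheory.integral_Icc_eq_integral_Ioc, ← intervalIntegral.integral_of_le hc]
    rw [intervalIntegral.integral_comp_sub_left (fun u => u) c]
    simp [integral_id]
  · apply Continuous.integrableOn_Icc
    continuity
  · exact (ae_restrict_iff' measurableSet_Icc).2 (ae_of_all _ fun x hx => by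
      simp only [Pi.zero_apply]; linarith [hx.2])

lemma lint_sq {c : ℝ} (hc : 0 ≤ c) :
    ∫⁻ x in Set.Icc 0 c, ENNReal.ofReal ((c - x)^2/2) = ENNReal.ofReal (c^3/6) := by
  rw [← MeasureTheory.ofReal_integral_eq_lintegral_ofReal]
  · congr 1
    rw [MeasureTheory.integral_Icc_eq_integral_Ioc, ← intervalIntegral.integral_of_le hc]
    have : ∀ x : ℝ, (c - x)^2/2 = (1/2) * (c - x)^2 := fun x => by ring
    simp_rw [this]
    rw [intervalIntegral.integral_const_mul]
    rw [intervalIntegral.integral_comp_sub_left (fun u => u^2) c]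
    simp [integral_pow]
    ring
  · apply Continuous.integrableOn_Icc
    continuity
  · exact (ae_restrict_iff' measurableSet_Icc).2 (ae_of_all _ fun x hx => by positivity)

lemma volS2 {c : ℝ} (hc : 0 ≤ c) :
    volume {p : ℝ × ℝ | 0 ≤ p.1 ∧ 0 ≤ p.2 ∧ p.1 + p.2 ≤ c} = ENNReal.ofReal (c^2/2) := by
  have hm : MeasurableSet {p : ℝ × ℝ | 0 ≤ p.1 ∧ 0 ≤ p.2 ∧ p.1 + p.2 ≤ c} := by
    apply MeasurableSet.inter
    · exact measurableSet_le measurable_const measurable_fst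
    apply MeasurableSet.inter
    · exact measurableSet_le measurable_const measurable_snd
    · exact measurableSet_le (measurable_fst.add measurable_snd) measurable_const
  rw [Measure.volume_eq_prod, Measure.prod_apply hm]
  have : (fun x => volume (Prod.mk x ⁻¹' {p : ℝ × ℝ | 0 ≤ p.1 ∧ 0 ≤ p.2 ∧ p.1 + p.2 ≤ c}))
      = fun x => (Set.Icc 0 c).indicator (fun x => ENNReal.ofReal (c - x)) x := by
    funext x
    by_cases hx : x ∈ Set.Icc 0 c
    · have : Prod.mk x ⁻¹' {p : ℝ × ℝ | 0 ≤ p.1 ∧ 0 ≤ p.2 ∧ p.1 + p.2 ≤ c} = Set.Icc 0 (c - x) := by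
        ext y
        simp only [Set.mem_preimage, Set.mem_setOf_eq, Set.mem_Icc]
        exact ⟨fun ⟨_, h2, h3⟩ => ⟨h2, by linarith⟩, fun ⟨h1, h2⟩ => ⟨hx.1, h1, by linarith⟩⟩
      rw [this, Real.volume_Icc, Set.indicator_of_mem hx]
      norm_num
    · have : Prod.mk x ⁻¹' {p : ℝ × ℝ | 0 ≤ p.1 ∧ 0 ≤ p.2 ∧ p.1 + p.2 ≤ c} = ∅ := by
        ext y
        simp only [Set.mem_preimage, Set.mem_setOf_eq, Set.mem_empty_iff_false, iff_false, not_and]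
        intro h1 h2
        simp only [Set.mem_Icc, not_and, not_le] at hx
        linarith [hx h1]
      rw [this, Set.indicator_of_notMem hx, measure_empty]
  rw [this, lintegral_indicator measurableSet_Icc _]
  exact lint_linear hc

lemma volS3 {c : ℝ} (hc : 0 ≤ c) :
    volume {p : ℝ × ℝ × ℝ | 0 ≤ p.1 ∧ 0 ≤ p.2.1 ∧ 0 ≤ p.2.2 ∧ p.1 + p.2.1 + p.2.2 ≤ c}
      = ENNReal.ofReal (c^3/6) := by
  have m1 : Measurable fun p : ℝ × ℝ × ℝ => p.1 := measurable_fst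
  have m2 : Measurable fun p : ℝ × ℝ × ℝ => p.2.1 := measurable_fst.comp measurable_snd
  have m3 : Measurable fun p : ℝ × ℝ × ℝ => p.2.2 := measurable_snd.comp measurable_snd
  have hm : MeasurableSet {p : ℝ × ℝ × ℝ | 0 ≤ p.1 ∧ 0 ≤ p.2.1 ∧ 0 ≤ p.2.2 ∧ p.1 + p.2.1 + p.2.2 ≤ c} :=
    ((measurableSet_le measurable_const m1).inter
      ((measurableSet_le measurable_const m2).inter
        ((measurableSet_le measurable_const m3).inter
          (measurableSet_le ((m1.add m2).add m3) measurable_const))))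
  rw [Measure.volume_eq_prod, Measure.prod_apply hm]
  have : (fun x => volume (Prod.mk x ⁻¹' {p : ℝ × ℝ × ℝ | 0 ≤ p.1 ∧ 0 ≤ p.2.1 ∧ 0 ≤ p.2.2 ∧ p.1 + p.2.1 + p.2.2 ≤ c}))
      = fun x => (Set.Icc 0 c).indicator (fun x => ENNReal.ofReal ((c - x)^2/2)) x := by
    funext x
    by_cases hx : x ∈ Set.Icc 0 c
    · have : Prod.mk x ⁻¹' {p : ℝ × ℝ × ℝ | 0 ≤ p.1 ∧ 0 ≤ p.2.1 ∧ 0 ≤ p.2.2 ∧ p.1 + p.2.1 + p.2.2 ≤ c}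
          = {q : ℝ × ℝ | 0 ≤ q.1 ∧ 0 ≤ q.2 ∧ q.1 + q.2 ≤ c - x} := by
        ext q
        simp only [Set.mem_preimage, Set.mem_setOf_eq]
        exact ⟨fun ⟨_, h2, h3, h4⟩ => ⟨h2, h3, by linarith⟩,
          fun ⟨h1, h2, h3⟩ => ⟨hx.1, h1, h2, by linarith⟩⟩
      rw [this, volS2 (by linarith [hx.2]), Set.indicator_of_mem hx]
    · have : Prod.mk x ⁻¹' {p : ℝ × ℝ × ℝ | 0 ≤ p.1 ∧ 0 ≤ p.2.1 ∧ 0 ≤ p.2.2 ∧ p.1 + p.2.1 + p.2.2 ≤ c}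
          = ∅ := by
        ext q
        simp only [Set.mem_preimage, Set.mem_setOf_eq, Set.mem_empty_iff_false, iff_false, not_and]
        intro h1 h2 h3
        simp only [Set.mem_Icc, not_and, not_le] at hx
        linarith [hx h1]
      rw [this, Set.indicator_of_notMem hx, measure_empty]
  rw [this, lintegral_indicator measurableSet_Icc _]
  exact lint_sq hc

lemma volPB1 {a b : ℝ} (ha : 0 ≤ a) (hb : 0 ≤ b) :
    volume {p : ℝ × ℝ × ℝ | -b ≤ p.1 ∧ p.1 ≤ 0 ∧ 0 ≤ p.2.1 ∧ 0 ≤ p.2.2 ∧ p.2.1 + p.2.2 ≤ a}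
      = ENNReal.ofReal (a^2/2*b) := by
  have : {p : ℝ × ℝ × ℝ | -b ≤ p.1 ∧ p.1 ≤ 0 ∧ 0 ≤ p.2.1 ∧ 0 ≤ p.2.2 ∧ p.2.1 + p.2.2 ≤ a}
      = (Set.Icc (-b) 0) ×ˢ {q : ℝ × ℝ | 0 ≤ q.1 ∧ 0 ≤ q.2 ∧ q.1 + q.2 ≤ a} := by
    ext p
    simp only [Set.mem_setOf_eq, Set.mem_prod, Set.mem_Icc]
    tauto
  rw [this, Measure.volume_eq_prod, Measure.prod_prod, Real.volume_Icc, volS2 ha,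
    ← ENNReal.ofReal_mul (by linarith)]
  congr 1
  ring


lemma volPB2 {a b : ℝ} (ha : 0 ≤ a) (hb : 0 ≤ b) :
    volume {p : ℝ × ℝ × ℝ | 0 ≤ p.1 ∧ -b ≤ p.2.1 ∧ p.2.1 ≤ 0 ∧ 0 ≤ p.2.2 ∧ p.1 + p.2.2 ≤ a}
      = ENNReal.ofReal (a^2/2*b) := by
  have m1 : Measurable fun p : ℝ × ℝ × ℝ => p.1 := measurable_fst
  have m2 : Measurable fun p : ℝ × ℝ × ℝ => p.2.1 := measurable_fst.comp measurable_snd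
  have m3 : Measurable fun p : ℝ × ℝ × ℝ => p.2.2 := measurable_snd.comp measurable_snd
  have hm : MeasurableSet {p : ℝ × ℝ × ℝ | 0 ≤ p.1 ∧ -b ≤ p.2.1 ∧ p.2.1 ≤ 0 ∧ 0 ≤ p.2.2 ∧ p.1 + p.2.2 ≤ a} :=
    (measurableSet_le measurable_const m1).inter
      ((measurableSet_le measurable_const m2).inter
        ((measurableSet_le m2 measurable_const).inter
          ((measurableSet_le measurable_const m3).inter
            (measurableSet_le (m1.add m3) measurable_const))))
  rw [Measure.volume_eq_prod, Measure.prod_apply hm]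
  have : (fun x => volume (Prod.mk x ⁻¹' {p : ℝ × ℝ × ℝ | 0 ≤ p.1 ∧ -b ≤ p.2.1 ∧ p.2.1 ≤ 0 ∧ 0 ≤ p.2.2 ∧ p.1 + p.2.2 ≤ a}))
      = fun x => (Set.Icc 0 a).indicator (fun x => ENNReal.ofReal b * ENNReal.ofReal (a - x)) x := by
    funext x
    by_cases hx : x ∈ Set.Icc 0 a
    · have : Prod.mk x ⁻¹' {p : ℝ × ℝ × ℝ | 0 ≤ p.1 ∧ -b ≤ p.2.1 ∧ p.2.1 ≤ 0 ∧ 0 ≤ p.2.2 ∧ p.1 + p.2.2 ≤ a}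
          = (Set.Icc (-b) 0) ×ˢ (Set.Icc 0 (a - x)) := by
        ext q
        simp only [Set.mem_preimage, Set.mem_setOf_eq, Set.mem_prod, Set.mem_Icc]
        exact ⟨fun ⟨_, h2, h3, h4, h5⟩ => ⟨⟨h2, h3⟩, h4, by linarith⟩,
          fun ⟨⟨h2, h3⟩, h4, h5⟩ => ⟨hx.1, h2, h3, h4, by linarith⟩⟩
      rw [this, Measure.volume_eq_prod, Measure.prod_prod, Real.volume_Icc, Real.volume_Icc,
        Set.indicator_of_mem hx]
      norm_num
    · have : Prod.mk x ⁻¹' {p : ℝ × ℝ × ℝ | 0 ≤ p.1 ∧ -b ≤ p.2.1 ∧ p.2.1 ≤ 0 ∧ 0 ≤ p.2.2 ∧ p.1 + p.2.2 ≤ a}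
          = ∅ := by
        ext q
        simp only [Set.mem_preimage, Set.mem_setOf_eq, Set.mem_empty_iff_false, iff_false, not_and]
        intro h1 h2 h3 h4
        simp only [Set.mem_Icc, not_and, not_le] at hx
        linarith [hx h1]
      rw [this, Set.indicator_of_notMem hx, measure_empty]
  have mf : Measurable fun x : ℝ => ENNReal.ofReal (a - x) := by fun_prop
  rw [this, lintegral_indicator measurableSet_Icc _, lintegral_const_mul _ mf,
    lint_linear ha, ← ENNReal.ofReal_mul hb]
  congr 1
  ring

lemma volPB3 {a b : ℝ} (ha : 0 ≤ a) (hb : 0 ≤ b) :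
    volume {p : ℝ × ℝ × ℝ | 0 ≤ p.1 ∧ 0 ≤ p.2.1 ∧ p.1 + p.2.1 ≤ a ∧ -b ≤ p.2.2 ∧ p.2.2 ≤ 0}
      = ENNReal.ofReal (a^2/2*b) := by
  have m1 : Measurable fun p : ℝ × ℝ × ℝ => p.1 := measurable_fst
  have m2 : Measurable fun p : ℝ × ℝ × ℝ => p.2.1 := measurable_fst.comp measurable_snd
  have m3 : Measurable fun p : ℝ × ℝ × ℝ => p.2.2 := measurable_snd.comp measurable_snd
  have hm : MeasurableSet {p : ℝ × ℝ × ℝ | 0 ≤ p.1 ∧ 0 ≤ p.2.1 ∧ p.1 + p.2.1 ≤ a ∧ -b ≤ p.2.2 ∧ p.2.2 ≤ 0} :=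
    (measurableSet_le measurable_const m1).inter
      ((measurableSet_le measurable_const m2).inter
        ((measurableSet_le (m1.add m2) measurable_const).inter
          ((measurableSet_le measurable_const m3).inter
            (measurableSet_le m3 measurable_const))))
  rw [Measure.volume_eq_prod, Measure.prod_apply hm]
  have : (fun x => volume (Prod.mk x ⁻¹' {p : ℝ × ℝ × ℝ | 0 ≤ p.1 ∧ 0 ≤ p.2.1 ∧ p.1 + p.2.1 ≤ a ∧ -b ≤ p.2.2 ∧ p.2.2 ≤ 0}))
      = fun x => (Set.Icc 0 a).indicator (fun x => ENNReal.ofReal b * ENNReal.ofReal (a - x)) x := by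
    funext x
    by_cases hx : x ∈ Set.Icc 0 a
    · have : Prod.mk x ⁻¹' {p : ℝ × ℝ × ℝ | 0 ≤ p.1 ∧ 0 ≤ p.2.1 ∧ p.1 + p.2.1 ≤ a ∧ -b ≤ p.2.2 ∧ p.2.2 ≤ 0}
          = (Set.Icc 0 (a - x)) ×ˢ (Set.Icc (-b) 0) := by
        ext q
        simp only [Set.mem_preimage, Set.mem_setOf_eq, Set.mem_prod, Set.mem_Icc]
        exact ⟨fun ⟨_, h2, h3, h4, h5⟩ => ⟨⟨h2, by linarith⟩, h4, h5⟩,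
          fun ⟨⟨h2, h3⟩, h4, h5⟩ => ⟨hx.1, h2, by linarith, h4, h5⟩⟩
      rw [this, Measure.volume_eq_prod, Measure.prod_prod, Real.volume_Icc, Real.volume_Icc,
        Set.indicator_of_mem hx]
      rw [show (0:ℝ) - -b = b by ring, show a - x - 0 = a - x by ring, mul_comm]
    · have : Prod.mk x ⁻¹' {p : ℝ × ℝ × ℝ | 0 ≤ p.1 ∧ 0 ≤ p.2.1 ∧ p.1 + p.2.1 ≤ a ∧ -b ≤ p.2.2 ∧ p.2.2 ≤ 0}
          = ∅ := by
        ext q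
        simp only [Set.mem_preimage, Set.mem_setOf_eq, Set.mem_empty_iff_false, iff_false, not_and]
        intro h1 h2 h3
        simp only [Set.mem_Icc, not_and, not_le] at hx
        linarith [hx h1]
      rw [this, Set.indicator_of_notMem hx, measure_empty]
  have mf : Measurable fun x : ℝ => ENNReal.ofReal (a - x) := by fun_prop
  rw [this, lintegral_indicator measurableSet_Icc _, lintegral_const_mul _ mf,
    lint_linear ha, ← ENNReal.ofReal_mul hb]
  congr 1
  ring

lemma negmp : MeasurePreserving (fun p : ℝ × ℝ × ℝ => -p) volume volume := by
  rw [Measure.volume_eq_prod]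
  have h1 : MeasurePreserving (fun x : ℝ => -x) volume volume := Measure.measurePreserving_neg _
  have h2 : MeasurePreserving (fun q : ℝ × ℝ => -q) volume volume := by
    rw [Measure.volume_eq_prod]
    exact (h1.prod h1 : MeasurePreserving (Prod.map _ _) _ _)
  exact (h1.prod h2 : MeasurePreserving (Prod.map _ _) _ _)

lemma vol_neg3 {s : Set (ℝ × ℝ × ℝ)} (hs : MeasurableSet s) : volume (-s) = volume s := by
  have : (-s) = (fun p : ℝ × ℝ × ℝ => -p) ⁻¹' s := by
    ext p; simp [Set.mem_neg]
  rw [this, negmp.measure_preimage hs.nullMeasurableSet]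

noncomputable def E3 : (Fin 3 → ℝ) ≃ᵐ ℝ × ℝ × ℝ :=
  (MeasurableEquiv.piFinSuccAbove (fun _ : Fin 3 => ℝ) 0).trans
    ((MeasurableEquiv.refl ℝ).prodCongr (MeasurableEquiv.finTwoArrow))

lemma E3_mp : MeasurePreserving E3 volume volume := by
  have h3 := volume_preserving_piFinSuccAbove (fun _ : Fin 3 => ℝ) 0
  have h2 := volume_preserving_finTwoArrow ℝ
  exact (((MeasurePreserving.id (volume : Measure ℝ)).prod h2)).comp h3

lemma E3_apply (t : Fin 3 → ℝ) : E3 t = (t 0, (t 1, t 2)) := rfl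

lemma vol_pi_eq (s : Set (ℝ × ℝ × ℝ)) :
    (volume : Measure (Fin 3 → ℝ)) (E3 ⁻¹' s) = volume s := by
  rw [← E3_mp.map_eq, MeasurableEquiv.map_apply]
def Nset : Set (ℝ × ℝ × ℝ) := {p | p.1 = 0 ∨ p.2.1 = 0 ∨ p.2.2 = 0}

lemma volN : volume Nset = 0 := by
  have h1 : Nset ⊆ ({(0:ℝ)} ×ˢ (Set.univ : Set (ℝ×ℝ))) ∪
      ((Set.univ : Set ℝ) ×ˢ (({(0:ℝ)} ×ˢ (Set.univ : Set ℝ)) ∪ ((Set.univ : Set ℝ) ×ˢ ({(0:ℝ)} : Set ℝ)))) := by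
    rintro p (h | h | h)
    · exact Or.inl ⟨h, trivial⟩
    · exact Or.inr ⟨trivial, Or.inl ⟨h, trivial⟩⟩
    · exact Or.inr ⟨trivial, Or.inr ⟨trivial, h⟩⟩
  refine measure_mono_null h1 (measure_union_null ?_ ?_)
  · rw [Measure.volume_eq_prod, Measure.prod_prod]
    simp
  · rw [Measure.volume_eq_prod, Measure.prod_prod]
    refine mul_eq_zero.2 (Or.inr (measure_union_null ?_ ?_)) <;>
      rw [Measure.volume_eq_prod, Measure.prod_prod] <;> simp

lemma vol_eq_of_sub {s t : Set (ℝ × ℝ × ℝ)} (h1 : s ⊆ t) (h2 : t \ s ⊆ Nset) :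
    volume t = volume s := by
  apply le_antisymm _ (measure_mono h1)
  calc volume t ≤ volume (s ∪ (t \ s)) := measure_mono (fun p hp => by
        by_cases h : p ∈ s
        · exact Or.inl h
        · exact Or.inr ⟨hp, h⟩)
  _ ≤ volume s + volume (t \ s) := measure_union_le _ _
  _ ≤ volume s + 0 := by
      gcongr
      exact le_trans (measure_mono h2) (le_of_eq volN)
  _ = volume s := add_zero _

lemma volQ3 {a b : ℝ} (ha : 0 ≤ a) (hb : 0 ≤ b) :
    volume {p : ℝ × ℝ × ℝ | Qcond a b p.1 p.2.1 p.2.2}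
      = ENNReal.ofReal ((a^3 + 9*a^2*b + 9*a*b^2 + b^3)/6) := by
  have m1 : Measurable fun p : ℝ × ℝ × ℝ => p.1 := measurable_fst
  have m2 : Measurable fun p : ℝ × ℝ × ℝ => p.2.1 := measurable_fst.comp measurable_snd
  have m3 : Measurable fun p : ℝ × ℝ × ℝ => p.2.2 := measurable_snd.comp measurable_snd
  set Q : Set (ℝ × ℝ × ℝ) := {p | Qcond a b p.1 p.2.1 p.2.2} with hQ
  set H1 : Set (ℝ × ℝ × ℝ) := {p | 0 < p.1} with hH1
  set H2 : Set (ℝ × ℝ × ℝ) := {p | 0 < p.2.1} with hH2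
  set H3 : Set (ℝ × ℝ × ℝ) := {p | 0 < p.2.2} with hH3
  have mH1 : MeasurableSet H1 := measurableSet_lt measurable_const m1
  have mH2 : MeasurableSet H2 := measurableSet_lt measurable_const m2
  have mH3 : MeasurableSet H3 := measurableSet_lt measurable_const m3
  -- helper to unfold memberships
  have memQ : ∀ p : ℝ × ℝ × ℝ, p ∈ Q ↔ Qcond a b p.1 p.2.1 p.2.2 := fun p => Iff.rfl
  -- the eight pieces
  have v1 : volume (Q ∩ H1 ∩ H2 ∩ H3) = ENNReal.ofReal (a^3/6) := by
    rw [show volume (Q ∩ H1 ∩ H2 ∩ H3)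
        = volume {p : ℝ × ℝ × ℝ | 0 ≤ p.1 ∧ 0 ≤ p.2.1 ∧ 0 ≤ p.2.2 ∧ p.1 + p.2.1 + p.2.2 ≤ a} from ?_,
      volS3 ha]
    apply (vol_eq_of_sub ?_ ?_).symm
    · rintro p ⟨⟨⟨hp, h1⟩, h2⟩, h3⟩
      obtain ⟨c1, c2, c3, c4, c5, c6, c7, c8, c9, c10, c11, c12, c13, c14⟩ := hp
      exact ⟨le_of_lt h1, le_of_lt h2, le_of_lt h3, c14⟩
    · rintro p ⟨⟨h0, h2, h3, h4⟩, hns⟩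
      by_cases e1 : p.1 = 0
      · exact Or.inl e1
      by_cases e2 : p.2.1 = 0
      · exact Or.inr (Or.inl e2)
      by_cases e3 : p.2.2 = 0
      · exact Or.inr (Or.inr e3)
      exfalso
      apply hns
      refine ⟨⟨⟨?_, lt_of_le_of_ne h0 (Ne.symm e1)⟩, lt_of_le_of_ne h2 (Ne.symm e2)⟩,
        lt_of_le_of_ne h3 (Ne.symm e3)⟩
      refine ⟨by linarith, by linarith, by linarith, by linarith, by linarith, by linarith,
        by linarith, by linarith, by linarith, by linarith, by linarith, by linarith,
        by linarith, by linarith⟩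

  have mB1 : MeasurableSet {p : ℝ × ℝ × ℝ | -a ≤ p.1 ∧ p.1 ≤ 0 ∧ 0 ≤ p.2.1 ∧ 0 ≤ p.2.2 ∧ p.2.1 + p.2.2 ≤ b} :=
    (measurableSet_le measurable_const m1).inter ((measurableSet_le m1 measurable_const).inter
      ((measurableSet_le measurable_const m2).inter ((measurableSet_le measurable_const m3).inter
        (measurableSet_le (m2.add m3) measurable_const))))
  have mB2 : MeasurableSet {p : ℝ × ℝ × ℝ | 0 ≤ p.1 ∧ -a ≤ p.2.1 ∧ p.2.1 ≤ 0 ∧ 0 ≤ p.2.2 ∧ p.1 + p.2.2 ≤ b} :=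
    (measurableSet_le measurable_const m1).inter ((measurableSet_le measurable_const m2).inter
      ((measurableSet_le m2 measurable_const).inter ((measurableSet_le measurable_const m3).inter
        (measurableSet_le (m1.add m3) measurable_const))))
  have mB3 : MeasurableSet {p : ℝ × ℝ × ℝ | 0 ≤ p.1 ∧ 0 ≤ p.2.1 ∧ p.1 + p.2.1 ≤ b ∧ -a ≤ p.2.2 ∧ p.2.2 ≤ 0} :=
    (measurableSet_le measurable_const m1).inter ((measurableSet_le measurable_const m2).inter
      ((measurableSet_le (m1.add m2) measurable_const).inter ((measurableSet_le measurable_const m3).inter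
        (measurableSet_le m3 measurable_const))))
  have mS3 : MeasurableSet {p : ℝ × ℝ × ℝ | 0 ≤ p.1 ∧ 0 ≤ p.2.1 ∧ 0 ≤ p.2.2 ∧ p.1 + p.2.1 + p.2.2 ≤ b} :=
    (measurableSet_le measurable_const m1).inter ((measurableSet_le measurable_const m2).inter
      ((measurableSet_le measurable_const m3).inter
        (measurableSet_le ((m1.add m2).add m3) measurable_const)))

  have w4 : volume {p : ℝ × ℝ × ℝ | 0 ≤ p.1 ∧ p.1 ≤ a ∧ p.2.1 ≤ 0 ∧ p.2.2 ≤ 0 ∧ -b ≤ p.2.1 + p.2.2}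
      = ENNReal.ofReal (b^2/2*a) := by
    rw [show {p : ℝ × ℝ × ℝ | 0 ≤ p.1 ∧ p.1 ≤ a ∧ p.2.1 ≤ 0 ∧ p.2.2 ≤ 0 ∧ -b ≤ p.2.1 + p.2.2}
        = -{p : ℝ × ℝ × ℝ | -a ≤ p.1 ∧ p.1 ≤ 0 ∧ 0 ≤ p.2.1 ∧ 0 ≤ p.2.2 ∧ p.2.1 + p.2.2 ≤ b} by
      ext p
      simp only [Set.mem_neg, Set.mem_setOf_eq, Prod.fst_neg, Prod.snd_neg]
      constructor <;> rintro ⟨h1, h2, h3, h4, h5⟩ <;>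
        exact ⟨by linarith, by linarith, by linarith, by linarith, by linarith⟩]
    rw [vol_neg3 mB1]
    exact volPB1 hb ha
  have w6 : volume {p : ℝ × ℝ × ℝ | p.1 ≤ 0 ∧ 0 ≤ p.2.1 ∧ p.2.1 ≤ a ∧ p.2.2 ≤ 0 ∧ -b ≤ p.1 + p.2.2}
      = ENNReal.ofReal (b^2/2*a) := by
    rw [show {p : ℝ × ℝ × ℝ | p.1 ≤ 0 ∧ 0 ≤ p.2.1 ∧ p.2.1 ≤ a ∧ p.2.2 ≤ 0 ∧ -b ≤ p.1 + p.2.2}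
        = -{p : ℝ × ℝ × ℝ | 0 ≤ p.1 ∧ -a ≤ p.2.1 ∧ p.2.1 ≤ 0 ∧ 0 ≤ p.2.2 ∧ p.1 + p.2.2 ≤ b} by
      ext p
      simp only [Set.mem_neg, Set.mem_setOf_eq, Prod.fst_neg, Prod.snd_neg]
      constructor <;> rintro ⟨h1, h2, h3, h4, h5⟩ <;>
        exact ⟨by linarith, by linarith, by linarith, by linarith, by linarith⟩]
    rw [vol_neg3 mB2]
    exact volPB2 hb ha
  have w7 : volume {p : ℝ × ℝ × ℝ | p.1 ≤ 0 ∧ p.2.1 ≤ 0 ∧ -b ≤ p.1 + p.2.1 ∧ 0 ≤ p.2.2 ∧ p.2.2 ≤ a}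
      = ENNReal.ofReal (b^2/2*a) := by
    rw [show {p : ℝ × ℝ × ℝ | p.1 ≤ 0 ∧ p.2.1 ≤ 0 ∧ -b ≤ p.1 + p.2.1 ∧ 0 ≤ p.2.2 ∧ p.2.2 ≤ a}
        = -{p : ℝ × ℝ × ℝ | 0 ≤ p.1 ∧ 0 ≤ p.2.1 ∧ p.1 + p.2.1 ≤ b ∧ -a ≤ p.2.2 ∧ p.2.2 ≤ 0} by
      ext p
      simp only [Set.mem_neg, Set.mem_setOf_eq, Prod.fst_neg, Prod.snd_neg]
      constructor <;> rintro ⟨h1, h2, h3, h4, h5⟩ <;>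
        exact ⟨by linarith, by linarith, by linarith, by linarith, by linarith⟩]
    rw [vol_neg3 mB3]
    exact volPB3 hb ha
  have w8 : volume {p : ℝ × ℝ × ℝ | p.1 ≤ 0 ∧ p.2.1 ≤ 0 ∧ p.2.2 ≤ 0 ∧ -b ≤ p.1 + p.2.1 + p.2.2}
      = ENNReal.ofReal (b^3/6) := by
    rw [show {p : ℝ × ℝ × ℝ | p.1 ≤ 0 ∧ p.2.1 ≤ 0 ∧ p.2.2 ≤ 0 ∧ -b ≤ p.1 + p.2.1 + p.2.2}
        = -{p : ℝ × ℝ × ℝ | 0 ≤ p.1 ∧ 0 ≤ p.2.1 ∧ 0 ≤ p.2.2 ∧ p.1 + p.2.1 + p.2.2 ≤ b} by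
      ext p
      simp only [Set.mem_neg, Set.mem_setOf_eq, Prod.fst_neg, Prod.snd_neg]
      constructor <;> rintro ⟨h1, h2, h3, h4⟩ <;>
        exact ⟨by linarith, by linarith, by linarith, by linarith⟩]
    rw [vol_neg3 mS3]
    exact volS3 hb

  have v2 : volume ((Q ∩ H1 ∩ H2) \ H3) = ENNReal.ofReal (a^2/2*b) := by
    rw [show volume ((Q ∩ H1 ∩ H2) \ H3) = volume {p : ℝ × ℝ × ℝ | 0 ≤ p.1 ∧ 0 ≤ p.2.1 ∧ p.1 + p.2.1 ≤ a ∧ -b ≤ p.2.2 ∧ p.2.2 ≤ 0} from ?_, volPB3 ha hb]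
    apply (vol_eq_of_sub ?_ ?_).symm
    · rintro p ⟨⟨⟨hq, h1⟩, h2⟩, h3⟩
      obtain ⟨c1, c2, c3, c4, c5, c6, c7, c8, c9, c10, c11, c12, c13, c14⟩ := hq
      exact ⟨le_of_lt h1, le_of_lt h2, c8, c5, not_lt.mp h3⟩
    · rintro p ⟨⟨g1, g2, g3, g4, g5⟩, hns⟩
      by_cases e1 : p.1 = 0
      · exact Or.inl e1
      by_cases e2 : p.2.1 = 0
      · exact Or.inr (Or.inl e2)
      exfalso
      apply hns
      refine ⟨⟨⟨?_, lt_of_le_of_ne g1 (Ne.symm e1)⟩, lt_of_le_of_ne g2 (Ne.symm e2)⟩, not_lt.mpr g5⟩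
      refine ⟨by linarith, by linarith, by linarith, by linarith, by linarith, by linarith,
        by linarith, by linarith, by linarith, by linarith, by linarith, by linarith,
        by linarith, by linarith⟩

  have v3 : volume (((Q ∩ H1) \ H2) ∩ H3) = ENNReal.ofReal (a^2/2*b) := by
    rw [show volume (((Q ∩ H1) \ H2) ∩ H3) = volume {p : ℝ × ℝ × ℝ | 0 ≤ p.1 ∧ -b ≤ p.2.1 ∧ p.2.1 ≤ 0 ∧ 0 ≤ p.2.2 ∧ p.1 + p.2.2 ≤ a} from ?_, volPB2 ha hb]
    apply (vol_eq_of_sub ?_ ?_).symm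
    · rintro p ⟨⟨⟨hq, h1⟩, h2⟩, h3⟩
      obtain ⟨c1, c2, c3, c4, c5, c6, c7, c8, c9, c10, c11, c12, c13, c14⟩ := hq
      exact ⟨le_of_lt h1, c3, not_lt.mp h2, le_of_lt h3, c10⟩
    · rintro p ⟨⟨g1, g2, g3, g4, g5⟩, hns⟩
      by_cases e1 : p.1 = 0
      · exact Or.inl e1
      by_cases e3 : p.2.2 = 0
      · exact Or.inr (Or.inr e3)
      exfalso
      apply hns
      refine ⟨⟨⟨?_, lt_of_le_of_ne g1 (Ne.symm e1)⟩, not_lt.mpr g3⟩, lt_of_le_of_ne g4 (Ne.symm e3)⟩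
      refine ⟨by linarith, by linarith, by linarith, by linarith, by linarith, by linarith,
        by linarith, by linarith, by linarith, by linarith, by linarith, by linarith,
        by linarith, by linarith⟩

  have v4 : volume (((Q ∩ H1) \ H2) \ H3) = ENNReal.ofReal (b^2/2*a) := by
    rw [show volume (((Q ∩ H1) \ H2) \ H3) = volume {p : ℝ × ℝ × ℝ | 0 ≤ p.1 ∧ p.1 ≤ a ∧ p.2.1 ≤ 0 ∧ p.2.2 ≤ 0 ∧ -b ≤ p.2.1 + p.2.2} from ?_, w4]
    apply (vol_eq_of_sub ?_ ?_).symm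
    · rintro p ⟨⟨⟨hq, h1⟩, h2⟩, h3⟩
      obtain ⟨c1, c2, c3, c4, c5, c6, c7, c8, c9, c10, c11, c12, c13, c14⟩ := hq
      exact ⟨le_of_lt h1, c2, not_lt.mp h2, not_lt.mp h3, c11⟩
    · rintro p ⟨⟨g1, g2, g3, g4, g5⟩, hns⟩
      by_cases e1 : p.1 = 0
      · exact Or.inl e1
      exfalso
      apply hns
      refine ⟨⟨⟨?_, lt_of_le_of_ne g1 (Ne.symm e1)⟩, not_lt.mpr g3⟩, not_lt.mpr g4⟩
      refine ⟨by linarith, by linarith, by linarith, by linarith, by linarith, by linarith,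
        by linarith, by linarith, by linarith, by linarith, by linarith, by linarith,
        by linarith, by linarith⟩

  have v5 : volume (((Q \ H1) ∩ H2) ∩ H3) = ENNReal.ofReal (a^2/2*b) := by
    rw [show volume (((Q \ H1) ∩ H2) ∩ H3) = volume {p : ℝ × ℝ × ℝ | -b ≤ p.1 ∧ p.1 ≤ 0 ∧ 0 ≤ p.2.1 ∧ 0 ≤ p.2.2 ∧ p.2.1 + p.2.2 ≤ a} from ?_, volPB1 ha hb]
    apply (vol_eq_of_sub ?_ ?_).symm
    · rintro p ⟨⟨⟨hq, h1⟩, h2⟩, h3⟩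
      obtain ⟨c1, c2, c3, c4, c5, c6, c7, c8, c9, c10, c11, c12, c13, c14⟩ := hq
      exact ⟨c1, not_lt.mp h1, le_of_lt h2, le_of_lt h3, c12⟩
    · rintro p ⟨⟨g1, g2, g3, g4, g5⟩, hns⟩
      by_cases e2 : p.2.1 = 0
      · exact Or.inr (Or.inl e2)
      by_cases e3 : p.2.2 = 0
      · exact Or.inr (Or.inr e3)
      exfalso
      apply hns
      refine ⟨⟨⟨?_, not_lt.mpr g2⟩, lt_of_le_of_ne g3 (Ne.symm e2)⟩, lt_of_le_of_ne g4 (Ne.symm e3)⟩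
      refine ⟨by linarith, by linarith, by linarith, by linarith, by linarith, by linarith,
        by linarith, by linarith, by linarith, by linarith, by linarith, by linarith,
        by linarith, by linarith⟩

  have v6 : volume (((Q \ H1) ∩ H2) \ H3) = ENNReal.ofReal (b^2/2*a) := by
    rw [show volume (((Q \ H1) ∩ H2) \ H3) = volume {p : ℝ × ℝ × ℝ | p.1 ≤ 0 ∧ 0 ≤ p.2.1 ∧ p.2.1 ≤ a ∧ p.2.2 ≤ 0 ∧ -b ≤ p.1 + p.2.2} from ?_, w6]
    apply (vol_eq_of_sub ?_ ?_).symm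
    · rintro p ⟨⟨⟨hq, h1⟩, h2⟩, h3⟩
      obtain ⟨c1, c2, c3, c4, c5, c6, c7, c8, c9, c10, c11, c12, c13, c14⟩ := hq
      exact ⟨not_lt.mp h1, le_of_lt h2, c4, not_lt.mp h3, c9⟩
    · rintro p ⟨⟨g1, g2, g3, g4, g5⟩, hns⟩
      by_cases e2 : p.2.1 = 0
      · exact Or.inr (Or.inl e2)
      exfalso
      apply hns
      refine ⟨⟨⟨?_, not_lt.mpr g1⟩, lt_of_le_of_ne g2 (Ne.symm e2)⟩, not_lt.mpr g4⟩
      refine ⟨by linarith, by linarith, by linarith, by linarith, by linarith, by linarith,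
        by linarith, by linarith, by linarith, by linarith, by linarith, by linarith,
        by linarith, by linarith⟩

  have v7 : volume (((Q \ H1) \ H2) ∩ H3) = ENNReal.ofReal (b^2/2*a) := by
    rw [show volume (((Q \ H1) \ H2) ∩ H3) = volume {p : ℝ × ℝ × ℝ | p.1 ≤ 0 ∧ p.2.1 ≤ 0 ∧ -b ≤ p.1 + p.2.1 ∧ 0 ≤ p.2.2 ∧ p.2.2 ≤ a} from ?_, w7]
    apply (vol_eq_of_sub ?_ ?_).symm
    · rintro p ⟨⟨⟨hq, h1⟩, h2⟩, h3⟩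
      obtain ⟨c1, c2, c3, c4, c5, c6, c7, c8, c9, c10, c11, c12, c13, c14⟩ := hq
      exact ⟨not_lt.mp h1, not_lt.mp h2, c7, le_of_lt h3, c6⟩
    · rintro p ⟨⟨g1, g2, g3, g4, g5⟩, hns⟩
      by_cases e3 : p.2.2 = 0
      · exact Or.inr (Or.inr e3)
      exfalso
      apply hns
      refine ⟨⟨⟨?_, not_lt.mpr g1⟩, not_lt.mpr g2⟩, lt_of_le_of_ne g4 (Ne.symm e3)⟩
      refine ⟨by linarith, by linarith, by linarith, by linarith, by linarith, by linarith,
        by linarith, by linarith, by linarith, by linarith, by linarith, by linarith,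
        by linarith, by linarith⟩

  have v8 : volume (((Q \ H1) \ H2) \ H3) = ENNReal.ofReal (b^3/6) := by
    rw [show volume (((Q \ H1) \ H2) \ H3)
        = volume {p : ℝ × ℝ × ℝ | p.1 ≤ 0 ∧ p.2.1 ≤ 0 ∧ p.2.2 ≤ 0 ∧ -b ≤ p.1 + p.2.1 + p.2.2} from ?_, w8]
    apply (vol_eq_of_sub ?_ ?_).symm
    · rintro p ⟨⟨⟨hq, h1⟩, h2⟩, h3⟩
      obtain ⟨c1, c2, c3, c4, c5, c6, c7, c8, c9, c10, c11, c12, c13, c14⟩ := hq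
      exact ⟨not_lt.mp h1, not_lt.mp h2, not_lt.mp h3, c13⟩
    · rintro p ⟨⟨g1, g2, g3, g4⟩, hns⟩
      exfalso
      apply hns
      refine ⟨⟨⟨?_, not_lt.mpr g1⟩, not_lt.mpr g2⟩, not_lt.mpr g3⟩
      refine ⟨by linarith, by linarith, by linarith, by linarith, by linarith, by linarith,
        by linarith, by linarith, by linarith, by linarith, by linarith, by linarith,
        by linarith, by linarith⟩

  rw [← measure_inter_add_diff Q mH1,
    ← measure_inter_add_diff (Q ∩ H1) mH2, ← measure_inter_add_diff (Q \ H1) mH2,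
    ← measure_inter_add_diff (Q ∩ H1 ∩ H2) mH3, ← measure_inter_add_diff ((Q ∩ H1) \ H2) mH3,
    ← measure_inter_add_diff ((Q \ H1) ∩ H2) mH3, ← measure_inter_add_diff ((Q \ H1) \ H2) mH3,
    v1, v2, v3, v4, v5, v6, v7, v8,
    ← ENNReal.ofReal_add (by positivity) (by positivity),
    ← ENNReal.ofReal_add (by positivity) (by positivity),
    ← ENNReal.ofReal_add (by positivity) (by positivity),
    ← ENNReal.ofReal_add (by positivity) (by positivity),
    ← ENNReal.ofReal_add (by positivity) (by positivity),
    ← ENNReal.ofReal_add (by positivity) (by positivity)]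
  congr 1
  ring

lemma vol_transfer (s : Set (Fin 3 → ℝ)) :
    (volume : Measure (EuclideanSpace ℝ (Fin 3))) (Emap '' s) = (volume : Measure (Fin 3 → ℝ)) s := by
  have : Emap '' s = (MeasurableEquiv.toLp 2 (Fin 3 → ℝ)).symm ⁻¹' s := by
    ext x
    constructor
    · rintro ⟨y, hy, rfl⟩
      exact hy
    · intro hx
      exact ⟨x.ofLp, hx, rfl⟩
  rw [this, ← (EuclideanSpace.volume_preserving_symm_measurableEquiv_toLp (Fin 3)).map_eq,
    MeasurableEquiv.map_apply]

lemma Lmap_det : LinearMap.det Lmap = Real.sqrt 2 / 2 := by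
  rw [Lmap, LinearMap.det_toLin']
  rw [show Mmat.det = Real.sqrt 3 / 2 * Real.sqrt (2/3) by
    simp [Mmat, Matrix.det_fin_three, Matrix.vecHead, Matrix.vecTail]]
  rw [div_mul_eq_mul_div, ← Real.sqrt_mul (by norm_num)]
  norm_num

lemma vol_Δpi : (volume : Measure (Fin 3 → ℝ)) Δpi = ENNReal.ofReal (1/6) := by
  have : Δpi = E3 ⁻¹' {p : ℝ × ℝ × ℝ | 0 ≤ p.1 ∧ 0 ≤ p.2.1 ∧ 0 ≤ p.2.2 ∧ p.1 + p.2.1 + p.2.2 ≤ (1:ℝ)} := by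
    rw [simplex_char]
    rfl
  rw [this, vol_pi_eq, volS3 (by norm_num)]
  norm_num

lemma vol_Qpi {a b : ℝ} (ha : 0 ≤ a) (hb : 0 ≤ b) :
    (volume : Measure (Fin 3 → ℝ)) (Qpi a b)
      = ENNReal.ofReal ((a^3 + 9*a^2*b + 9*a*b^2 + b^3)/6) := by
  have : Qpi a b = E3 ⁻¹' {p : ℝ × ℝ × ℝ | Qcond a b p.1 p.2.1 p.2.2} := rfl
  rw [this, vol_pi_eq, volQ3 ha hb]

lemma sum_image {a b : ℝ} :
    a • (Lmap '' Δpi) + b • (-(Lmap '' Δpi)) = Lmap '' (a • Δpi + b • (-Δpi)) := by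
  ext v
  constructor
  · rintro ⟨u, hu, w, hw, rfl⟩
    obtain ⟨y, hy, rfl⟩ := hu
    obtain ⟨d, hd, rfl⟩ := hy
    obtain ⟨z, hz, rfl⟩ := hw
    rw [Set.mem_neg] at hz
    obtain ⟨e, he, hle⟩ := hz
    refine ⟨a • d + b • (-e), ⟨a • d, Set.smul_mem_smul_set hd, b • (-e), ?_, rfl⟩, ?_⟩
    · exact Set.smul_mem_smul_set (by rwa [Set.mem_neg, neg_neg])
    · simp only [map_add, _root_.map_smul, map_neg, hle, neg_neg]
  · rintro ⟨t, ⟨u, hu, w, hw, rfl⟩, rfl⟩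
    obtain ⟨d, hd, rfl⟩ := hu
    obtain ⟨e, he, rfl⟩ := hw
    rw [Set.mem_neg] at he
    refine ⟨a • Lmap d, Set.smul_mem_smul_set ⟨d, hd, rfl⟩, b • Lmap e, ?_, ?_⟩
    · refine Set.smul_mem_smul_set ?_
      rw [Set.mem_neg]
      exact ⟨-e, he, by rw [map_neg]⟩
    · simp only [map_add, _root_.map_smul]

lemma sum_image2 {a b : ℝ} {S : Set (Fin 3 → ℝ)} :
    a • (Emap '' S) + b • (-(Emap '' S)) = Emap '' (a • S + b • (-S)) := by
  ext v
  constructor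
  · rintro ⟨u, hu, w, hw, rfl⟩
    obtain ⟨y, hy, rfl⟩ := hu
    obtain ⟨d, hd, rfl⟩ := hy
    obtain ⟨z, hz, rfl⟩ := hw
    rw [Set.mem_neg] at hz
    obtain ⟨e, he, hle⟩ := hz
    refine ⟨a • d + b • (-e), ⟨a • d, Set.smul_mem_smul_set hd, b • (-e), ?_, rfl⟩, ?_⟩
    · exact Set.smul_mem_smul_set (by rwa [Set.mem_neg, neg_neg])
    · simp only [map_add, _root_.map_smul, map_neg, hle, neg_neg]
  · rintro ⟨t, ⟨u, hu, w, hw, rfl⟩, rfl⟩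
    obtain ⟨d, hd, rfl⟩ := hu
    obtain ⟨e, he, rfl⟩ := hw
    rw [Set.mem_neg] at he
    refine ⟨a • Emap d, Set.smul_mem_smul_set ⟨d, hd, rfl⟩, b • Emap e, ?_, ?_⟩
    · refine Set.smul_mem_smul_set ?_
      rw [Set.mem_neg]
      exact ⟨-e, he, by rw [map_neg]⟩
    · simp only [map_add, _root_.map_smul]

theorem volume_minkowski_sum_tetrahedron_inverted (α : ℝ) (h0 : 0 ≤ α) (h1 : α ≤ 1) :
    volume (α • T + ((1 - α) / 2) • (-T)) =
      ENNReal.ofReal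
        (α ^ 3 + 9 / 2 * α ^ 2 * (1 - α) + 9 / 4 * α * (1 - α) ^ 2 + 1 / 8 * (1 - α) ^ 3) *
        volume T ∧
    volume T = ENNReal.ofReal (Real.sqrt 2 / 12) := by
  have hβ : 0 ≤ (1 - α) / 2 := by linarith
  have habs : |LinearMap.det Lmap| = Real.sqrt 2 / 2 := by
    rw [Lmap_det, abs_of_nonneg (by positivity)]
  have hT : volume T = ENNReal.ofReal (Real.sqrt 2 / 12) := by
    rw [T_eq, vol_transfer,
      Measure.addHaar_image_linearMap, habs, vol_Δpi,
      ← ENNReal.ofReal_mul (p := Real.sqrt 2 / 2) (by positivity)]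
    congr 1
    ring
  refine ⟨?_, hT⟩
  have hset : α • T + ((1 - α) / 2) • (-T) = Emap '' (Lmap '' (Qpi α ((1 - α) / 2))) := by
    rw [T_eq, sum_image2, sum_image, mink h0 hβ]
  have h2 : (0:ℝ) ≤ 1 - α := by linarith
  have hpoly : 0 ≤ α ^ 3 + 9 / 2 * α ^ 2 * (1 - α) + 9 / 4 * α * (1 - α) ^ 2 + 1 / 8 * (1 - α) ^ 3 := by
    have t2 : (0:ℝ) ≤ α ^ 2 * (1 - α) := mul_nonneg (by positivity) h2
    have t3 : (0:ℝ) ≤ α * (1 - α) ^ 2 := mul_nonneg h0 (by positivity)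
    have t4 : (0:ℝ) ≤ (1 - α) ^ 3 := by positivity
    have t1 : (0:ℝ) ≤ α ^ 3 := by positivity
    linarith
  rw [hset, vol_transfer, Measure.addHaar_image_linearMap, habs, vol_Qpi h0 hβ, hT,
    ← ENNReal.ofReal_mul (p := Real.sqrt 2 / 2) (by positivity),
    ← ENNReal.ofReal_mul hpoly]
  congr 1
  ring
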